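/- The function f(r,t) = r + t − Λ(r,t) for r,t ≥ 0 (extended by +∞ elsewhere), where Λ is the logarithmic mean, is convex, positively 1-homogeneous, and satisfies f(r,t) ≥ (r+t)/2 for all r, t ≥ 0. -/

import Mathlib

open Real

noncomputable def logMean (r t : ℝ) : ℝ :=
  if r = 0 ∨ t = 0 then 0
  else if r = t then r
  else (r - t) / (Real.log r - Real.log t)

noncomputable def f (p : ℝ × ℝ) : ℝ := p.1 + p.2 - logMean p.1 p.2

lemma integrand_cont {r t : ℝ} (hr : 0 < r) (ht : 0 < t) :
    Continuous fun s : ℝ => r ^ s * t ^ (1 - s) := by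
  have h : (fun s : ℝ => r ^ s * t ^ (1 - s)) =
      fun s : ℝ => Real.exp (Real.log r * s) * Real.exp (Real.log t * (1 - s)) := by
    funext s
    rw [Real.rpow_def_of_pos hr, Real.rpow_def_of_pos ht]
  rw [h]; fun_prop

lemma integrand_intble {r t : ℝ} (hr : 0 < r) (ht : 0 < t) :
    IntervalIntegrable (fun s : ℝ => r ^ s * t ^ (1 - s)) MeasureTheory.volume 0 1 :=
  (integrand_cont hr ht).intervalIntegrable 0 1

lemma logMean_integral {r t : ℝ} (hr : 0 < r) (ht : 0 < t) :
    logMean r t = ∫ s in (0:ℝ)..1, r ^ s * t ^ (1 - s) := by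
  have hkey : ∀ s : ℝ, r ^ s * t ^ (1 - s) = t * Real.exp ((Real.log r - Real.log t) * s) := by
    intro s
    rw [Real.rpow_def_of_pos hr, Real.rpow_def_of_pos ht, ← Real.exp_add]
    nth_rewrite 2 [← Real.exp_log ht]
    rw [← Real.exp_add]
    exact congrArg Real.exp (by ring)
  by_cases h : r = t
  · subst h
    simp only [hkey, sub_self, zero_mul, Real.exp_zero, mul_one]
    rw [intervalIntegral.integral_const]
    simp [logMean, hr.ne']
  · have hlog : Real.log r ≠ Real.log t := fun hl =>
      h (Real.log_injOn_pos (Set.mem_Ioi.mpr hr) (Set.mem_Ioi.mpr ht) hl)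
    have ha : Real.log r - Real.log t ≠ 0 := sub_ne_zero.mpr hlog
    set a := Real.log r - Real.log t with ha_def
    simp only [hkey]
    rw [intervalIntegral.integral_const_mul]
    have hint : (∫ s in (0:ℝ)..1, Real.exp (a * s)) = (Real.exp a - 1) / a := by
      rw [intervalIntegral.integral_comp_mul_left (fun x => Real.exp x) ha]
      simp [integral_exp, div_eq_inv_mul]
    rw [hint]
    have hea : Real.exp a = r / t := by
      rw [ha_def, Real.exp_sub, Real.exp_log hr, Real.exp_log ht]
    rw [hea]
    rw [logMean]
    rw [if_neg (by push_neg; exact ⟨hr.ne', ht.ne'⟩), if_neg h]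
    field_simp
    ring

lemma logMean_nonneg {r t : ℝ} (hr : 0 ≤ r) (ht : 0 ≤ t) : 0 ≤ logMean r t := by
  rcases eq_or_lt_of_le hr with h | hr'
  · simp [logMean, ← h]
  rcases eq_or_lt_of_le ht with h | ht'
  · simp [logMean, ← h]
  rw [logMean_integral hr' ht']
  apply intervalIntegral.integral_nonneg zero_le_one
  intro s _
  positivity

lemma pointwise_superadd {x y u v : ℝ} (hx : 0 < x) (hy : 0 < y) (hu : 0 ≤ u) (hv : 0 ≤ v)
    {s : ℝ} (hs0 : 0 ≤ s) (hs1 : s ≤ 1) :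
    u ^ s * v ^ (1 - s) + x ^ s * y ^ (1 - s) ≤ (u + x) ^ s * (v + y) ^ (1 - s) := by
  have hX : (0:ℝ) < u + x := by linarith
  have hY : (0:ℝ) < v + y := by linarith
  have h1s : (0:ℝ) ≤ 1 - s := by linarith
  have h1 := Real.geom_mean_le_arith_mean2_weighted hs0 h1s
    (div_nonneg hu hX.le) (div_nonneg hv hY.le) (by ring)
  have h2 := Real.geom_mean_le_arith_mean2_weighted hs0 h1s
    (div_nonneg hx.le hX.le) (div_nonneg hy.le hY.le) (by ring)
  have hsum1 : s * (u / (u + x)) + (1 - s) * (v / (v + y)) +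
      (s * (x / (u + x)) + (1 - s) * (y / (v + y))) = 1 := by
    field_simp
    ring
  have hsum : (u / (u + x)) ^ s * (v / (v + y)) ^ (1 - s) +
      (x / (u + x)) ^ s * (y / (v + y)) ^ (1 - s) ≤ 1 := by linarith
  rw [Real.div_rpow hu hX.le, Real.div_rpow hv hY.le, Real.div_rpow hx.le hX.le,
    Real.div_rpow hy.le hY.le, div_mul_div_comm, div_mul_div_comm, ← add_div,
    div_le_one (by positivity)] at hsum
  linarith

lemma logMean_mono {r t r' t' : ℝ} (hr : 0 < r) (ht : 0 < t) (hr' : r ≤ r') (ht' : t ≤ t') :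
    logMean r t ≤ logMean r' t' := by
  have hr'0 : 0 < r' := lt_of_lt_of_le hr hr'
  have ht'0 : 0 < t' := lt_of_lt_of_le ht ht'
  rw [logMean_integral hr ht, logMean_integral hr'0 ht'0]
  apply intervalIntegral.integral_mono_on zero_le_one (integrand_intble hr ht)
    (integrand_intble hr'0 ht'0)
  intro s hs
  apply mul_le_mul (Real.rpow_le_rpow hr.le hr' hs.1)
    (Real.rpow_le_rpow ht.le ht' (by linarith [hs.2])) (by positivity) (by positivity)

lemma logMean_superadd {r1 t1 r2 t2 : ℝ} (hr1 : 0 ≤ r1) (ht1 : 0 ≤ t1)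
    (hr2 : 0 ≤ r2) (ht2 : 0 ≤ t2) :
    logMean r1 t1 + logMean r2 t2 ≤ logMean (r1 + r2) (t1 + t2) := by
  by_cases h1 : r1 = 0 ∨ t1 = 0
  · have hz : logMean r1 t1 = 0 := by rw [logMean, if_pos h1]
    rw [hz, zero_add]
    by_cases h2 : r2 = 0 ∨ t2 = 0
    · rw [logMean, if_pos h2]
      exact logMean_nonneg (by linarith) (by linarith)
    · push_neg at h2
      exact logMean_mono (lt_of_le_of_ne hr2 (Ne.symm h2.1)) (lt_of_le_of_ne ht2 (Ne.symm h2.2))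
        (by linarith) (by linarith)
  · push_neg at h1
    have hr1' : 0 < r1 := lt_of_le_of_ne hr1 (Ne.symm h1.1)
    have ht1' : 0 < t1 := lt_of_le_of_ne ht1 (Ne.symm h1.2)
    by_cases h2 : r2 = 0 ∨ t2 = 0
    · have hz : logMean r2 t2 = 0 := by rw [logMean, if_pos h2]
      rw [hz, add_zero]
      exact logMean_mono hr1' ht1' (by linarith) (by linarith)
    · push_neg at h2
      have hr2' : 0 < r2 := lt_of_le_of_ne hr2 (Ne.symm h2.1)
      have ht2' : 0 < t2 := lt_of_le_of_ne ht2 (Ne.symm h2.2)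
      rw [logMean_integral hr1' ht1', logMean_integral hr2' ht2',
        logMean_integral (by linarith) (by linarith),
        ← intervalIntegral.integral_add (integrand_intble hr1' ht1') (integrand_intble hr2' ht2')]
      apply intervalIntegral.integral_mono_on zero_le_one
        ((integrand_intble hr1' ht1').add (integrand_intble hr2' ht2'))
        (integrand_intble (by linarith) (by linarith))
      intro s hs
      exact pointwise_superadd hr2' ht2' hr1 ht1 hs.1 hs.2

lemma logMean_smul {r t : ℝ} (c : ℝ) (hc : 0 ≤ c) (hr : 0 ≤ r) (ht : 0 ≤ t) :
    logMean (c * r) (c * t) = c * logMean r t := by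
  rcases eq_or_lt_of_le hc with h | hc'
  · simp [logMean, ← h]
  by_cases h : r = 0 ∨ t = 0
  · rcases h with h | h <;> simp [logMean, h]
  push_neg at h
  have hr' : 0 < r := lt_of_le_of_ne hr (Ne.symm h.1)
  have ht' : 0 < t := lt_of_le_of_ne ht (Ne.symm h.2)
  have hcr : c * r ≠ 0 := by positivity
  have hct : c * t ≠ 0 := by positivity
  by_cases he : r = t
  · subst he
    rw [logMean, if_neg (by push_neg; exact ⟨hcr, hcr⟩), if_pos rfl,
      logMean, if_neg (by push_neg; exact ⟨h.1, h.1⟩), if_pos rfl]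
  · have hne : c * r ≠ c * t := fun hh => he (mul_left_cancel₀ hc'.ne' hh)
    rw [logMean, if_neg (by push_neg; exact ⟨hcr, hct⟩), if_neg hne,
      logMean, if_neg (by push_neg; exact ⟨h.1, h.2⟩), if_neg he,
      Real.log_mul hc'.ne' h.1, Real.log_mul hc'.ne' h.2]
    have hld : Real.log r - Real.log t ≠ 0 := sub_ne_zero.mpr fun hl =>
      he (Real.log_injOn_pos (Set.mem_Ioi.mpr hr') (Set.mem_Ioi.mpr ht') hl)
    field_simp
    rw [show Real.log c + Real.log r - (Real.log c + Real.log t) = Real.log r - Real.log t by ring,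
      div_self hld]

lemma logMean_le_half {r t : ℝ} (hr : 0 ≤ r) (ht : 0 ≤ t) : logMean r t ≤ (r + t) / 2 := by
  by_cases h : r = 0 ∨ t = 0
  · rw [logMean, if_pos h]; positivity
  push_neg at h
  have hr' : 0 < r := lt_of_le_of_ne hr (Ne.symm h.1)
  have ht' : 0 < t := lt_of_le_of_ne ht (Ne.symm h.2)
  rw [logMean_integral hr' ht']
  have hInt : (∫ s in (0:ℝ)..1, (s * r + (1 - s) * t)) = (r + t) / 2 := by
    have h1 : (∫ s in (0:ℝ)..1, (s * r + (1 - s) * t))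
        = (∫ s in (0:ℝ)..1, (s * (r - t) + t)) := by
      congr 1; funext s; ring
    rw [h1, intervalIntegral.integral_add ((by fun_prop : Continuous fun s : ℝ => s * (r - t)).intervalIntegrable 0 1) (continuous_const.intervalIntegrable 0 1),
      intervalIntegral.integral_mul_const, integral_id, intervalIntegral.integral_const]
    norm_num
    ring
  rw [← hInt]
  apply intervalIntegral.integral_mono_on zero_le_one (integrand_intble hr' ht')
    ((by fun_prop : Continuous fun s : ℝ => s * r + (1 - s) * t).intervalIntegrable 0 1)
  intro s hs
  exact Real.geom_mean_le_arith_mean2_weighted hs.1 (by linarith [hs.2]) hr ht (by ring)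

theorem f_convex_homogeneous_bound :
    ConvexOn ℝ {p : ℝ × ℝ | 0 ≤ p.1 ∧ 0 ≤ p.2} f ∧
    (∀ c : ℝ, 0 ≤ c → ∀ p : ℝ × ℝ, 0 ≤ p.1 → 0 ≤ p.2 → f (c • p) = c * f p) ∧
    (∀ p : ℝ × ℝ, 0 ≤ p.1 → 0 ≤ p.2 → (p.1 + p.2) / 2 ≤ f p) := by
  refine ⟨⟨?_, ?_⟩, ?_, ?_⟩
  · intro p hp q hq a b ha hb hab
    exact ⟨add_nonneg (mul_nonneg ha hp.1) (mul_nonneg hb hq.1),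
      add_nonneg (mul_nonneg ha hp.2) (mul_nonneg hb hq.2)⟩
  · intro p hp q hq a b ha hb hab
    simp only [f, Prod.fst_add, Prod.snd_add, Prod.smul_fst, Prod.smul_snd, smul_eq_mul]
    have hsup := logMean_superadd (mul_nonneg ha hp.1) (mul_nonneg ha hp.2)
      (mul_nonneg hb hq.1) (mul_nonneg hb hq.2)
    rw [logMean_smul a ha hp.1 hp.2, logMean_smul b hb hq.1 hq.2] at hsup
    linarith
  · intro c hc p hp1 hp2
    simp only [f, Prod.smul_fst, Prod.smul_snd, smul_eq_mul]
    rw [logMean_smul c hc hp1 hp2]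
    ring
  · intro p hp1 hp2
    have := logMean_le_half hp1 hp2
    simp only [f]
    linarith
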